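/- There is no constant c > 0 such that τ₁·τ₂ > c implies the Hunt–Kan–Yorke condition: for every c > 0 there exist positive reals τ₁ ≥ τ₂ with τ₁·τ₂ > c such that (τ₁, τ₂) does not satisfy the HKY condition. -/

import Mathlib

/-- The Hunt–Kan–Yorke condition on a pair of positive reals `(τ₁, τ₂)`. -/
def HKYPair (τ₁ τ₂ : ℝ) : Prop :=
  0 < τ₁ ∧ 0 < τ₂ ∧ τ₂ ≤ τ₁ ∧
    τ₁ > (τ₂ ^ 2 + 3 * τ₂ + 1) / τ₂ ^ 2 ∧ τ₂ > (2 * τ₁ + 1) ^ 2 / τ₁ ^ 3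

/-- **Remark.** There is no constant `c > 0` such that `τ₁ · τ₂ > c` implies the HKY
condition: for every `c > 0` there exist positive reals `τ₁ ≥ τ₂` with `τ₁ · τ₂ > c` for
which `(τ₁, τ₂)` fails the HKY condition. -/
theorem hky_not_implied_by_product (c : ℝ) (hc : 0 < c) :
    ∃ τ₁ τ₂ : ℝ, 0 < τ₂ ∧ τ₂ ≤ τ₁ ∧ τ₁ * τ₂ > c ∧ ¬ HKYPair τ₁ τ₂ := by
  have hc1 : (0:ℝ) < c + 1 := by linarith
  refine ⟨(c + 1) ^ 2, 1 / (c + 1), by positivity, ?_, ?_, ?_⟩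
  · rw [div_le_iff₀ hc1]
    nlinarith
  · rw [gt_iff_lt, mul_one_div, lt_div_iff₀ hc1]
    nlinarith
  · rintro ⟨-, h2, -, h4, -⟩
    rw [gt_iff_lt, div_lt_iff₀ (by positivity)] at h4
    field_simp at h4
    nlinarith [sq_nonneg (c+1)]
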